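/- Let ℓ, m, p, P be real numbers with 1 < ℓ < m < p < P. Then there exists a continuous function f : [0,∞) → ℝ with f(0) = 0 and f(s) > 0 for all s > 0, such that s ↦ s^{−P} f(s) is nonincreasing on (0,∞), s ↦ s^{−ℓ} f(s) is nondecreasing on (0,∞), and there exist sequences (sᵢ) and (tᵢ) tending to ∞ with f(sᵢ) = sᵢ^p and f(tᵢ) = tᵢ^m for all i. -/

import Mathlib

open Set Filter

set_option maxHeartbeats 1600000 in
/-- existence of a strongly oscillating nonlinearity between the
powers `s^m` and `s^p`, with `s^{-P} f(s)` nonincreasing and `s^{-ℓ} f(s)`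
nondecreasing. -/
theorem stmt_16 (ℓ m p P : ℝ) (h1 : 1 < ℓ) (h2 : ℓ < m) (h3 : m < p) (h4 : p < P) :
    ∃ f : ℝ → ℝ,
      ContinuousOn f (Ici 0) ∧ f 0 = 0 ∧ (∀ s : ℝ, 0 < s → 0 < f s) ∧
      AntitoneOn (fun s : ℝ => f s / s ^ P) (Ioi 0) ∧
      MonotoneOn (fun s : ℝ => f s / s ^ ℓ) (Ioi 0) ∧
      ∃ S T : ℕ → ℝ, Tendsto S atTop atTop ∧ Tendsto T atTop atTop ∧
        (∀ i, f (S i) = S i ^ p) ∧ (∀ i, f (T i) = T i ^ m) := by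
  set A : ℝ := (p - m) / 2 with hAdef
  set q : ℝ := (m + p) / 2 with hqdef
  set δ : ℝ := min (m - ℓ) (P - p) with hδdef
  have hA : 0 < A := by simp only [hAdef]; linarith
  have hδ : 0 < δ := lt_min (by linarith) (by linarith)
  have hδl : δ ≤ m - ℓ := min_le_left _ _
  have hδr : δ ≤ P - p := min_le_right _ _
  set θ : ℝ := δ / (2 * A) with hθdef
  have hθpos : 0 < θ := by positivity
  have hAθ : 2 * A * θ = δ := by rw [hθdef]; field_simp
  set u : ℝ → ℝ := fun x => θ * Real.log (1 + x ^ 2) with hudef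
  set g : ℝ → ℝ := fun x => q * x + A * x * Real.sin (u x) with hgdef
  set D : ℝ → ℝ := fun x =>
    q + (A * Real.sin (u x) + A * x * (Real.cos (u x) * (θ * ((2 * x ^ 1) / (1 + x ^ 2))))) with hDdef
  have h1x : ∀ x : ℝ, (0:ℝ) < 1 + x ^ 2 := fun x => by positivity
  -- derivative of g
  have hD : ∀ x : ℝ, HasDerivAt g (D x) x := by
    intro x
    have hu : HasDerivAt (fun x : ℝ => θ * Real.log (1 + x ^ 2))
        (θ * ((2 * x ^ 1) / (1 + x ^ 2))) x := by
      have := (((hasDerivAt_pow 2 x).const_add 1).log (h1x x).ne').const_mul θ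
      refine this.congr_deriv ?_
      norm_num
    have hs : HasDerivAt (fun x : ℝ => Real.sin (u x))
        (Real.cos (u x) * (θ * ((2 * x ^ 1) / (1 + x ^ 2)))) x := hu.sin
    have hAx : HasDerivAt (fun x : ℝ => A * x) A x := by
      simpa using (hasDerivAt_id x).const_mul A
    have := ((hasDerivAt_id x).const_mul q).add (hAx.mul hs)
    refine this.congr_deriv ?_
    simp only [hDdef]
    ring
  -- bounds on the derivative
  have hDbound : ∀ x : ℝ, ℓ ≤ D x ∧ D x ≤ P := by
    intro x
    have hsin := Real.neg_one_le_sin (u x)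
    have hsin' := Real.sin_le_one (u x)
    have hcos := Real.neg_one_le_cos (u x)
    have hcos' := Real.cos_le_one (u x)
    have hx1 := h1x x
    have ht0 : 0 ≤ x ^ 2 / (1 + x ^ 2) := by positivity
    have ht1 : x ^ 2 / (1 + x ^ 2) ≤ 1 := by
      rw [div_le_one hx1]; linarith
    have hkey : A * x * (Real.cos (u x) * (θ * ((2 * x ^ 1) / (1 + x ^ 2))))
        = 2 * A * θ * Real.cos (u x) * (x ^ 2 / (1 + x ^ 2)) := by
      field_simp
    have hq1 : q - A = m := by simp only [hqdef, hAdef]; ring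
    have hq2 : q + A = p := by simp only [hqdef, hAdef]; ring
    constructor
    · have : -δ ≤ 2 * A * θ * Real.cos (u x) * (x ^ 2 / (1 + x ^ 2)) := by
        rw [hAθ] at *
        nlinarith [mul_nonneg hδ.le ht0]
      simp only [hDdef]
      rw [hkey]
      nlinarith [mul_le_mul_of_nonneg_left hsin hA.le]
    · have : 2 * A * θ * Real.cos (u x) * (x ^ 2 / (1 + x ^ 2)) ≤ δ := by
        rw [hAθ]
        nlinarith [mul_nonneg hδ.le ht0]
      simp only [hDdef]
      rw [hkey]
      nlinarith [mul_le_mul_of_nonneg_left hsin' hA.le]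
  have hgdiff : Differentiable ℝ g := fun x => (hD x).differentiableAt
  -- monotonicity of g - c x
  have hmonl : Monotone (fun x => g x - ℓ * x) := by
    apply monotone_of_deriv_nonneg
    · exact fun x => ((hD x).sub ((hasDerivAt_id x).const_mul ℓ)).differentiableAt
    · intro x
      rw [show (fun x => g x - ℓ * x) = g - fun x => ℓ * x from rfl,
        ((hD x).sub (by simpa using (hasDerivAt_id x).const_mul ℓ)).deriv]
      linarith [(hDbound x).1]
  have hmonP : Antitone (fun x => g x - P * x) := by
    apply antitone_of_deriv_nonpos
    · exact fun x => ((hD x).sub ((hasDerivAt_id x).const_mul P)).differentiableAt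
    · intro x
      rw [show (fun x => g x - P * x) = g - fun x => P * x from rfl,
        ((hD x).sub (by simpa using (hasDerivAt_id x).const_mul P)).deriv]
      linarith [(hDbound x).2]
  -- bounds on g
  have hgm : ∀ x : ℝ, x ≤ 0 → g x ≤ m * x := by
    intro x hx
    have hsin := Real.neg_one_le_sin (u x)
    simp only [hgdef]
    nlinarith [mul_le_mul_of_nonneg_left hsin hA.le]
  -- definition of f
  set f : ℝ → ℝ := fun s => if s = 0 then 0 else Real.exp (g (Real.log s)) with hfdef
  have hf0 : f 0 = 0 := by simp [hfdef]
  have hfpos : ∀ s : ℝ, 0 < s → 0 < f s := by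
    intro s hs
    simp only [hfdef, if_neg hs.ne']
    exact Real.exp_pos _
  have hfval : ∀ s : ℝ, s ≠ 0 → f s = Real.exp (g (Real.log s)) := by
    intro s hs; simp [hfdef, hs]
  have hgcont : Continuous g := by
    have : Continuous u := by
      apply continuous_const.mul
      exact (continuous_const.add (continuous_pow 2)).log (fun x => (h1x x).ne')
    fun_prop
  -- continuity
  have hfcont : ContinuousOn f (Ici 0) := by
    intro s hs
    rcases eq_or_lt_of_le (mem_Ici.mp hs) with h | h
    · -- s = 0
      subst h
      rw [ContinuousWithinAt, hf0]
      have hub : ∀ᶠ t in (nhdsWithin (0:ℝ) (Ici 0)), f t ≤ t ^ m := by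
        have h1 : ∀ᶠ t in (nhdsWithin (0:ℝ) (Ici 0)), t < 1 :=
          eventually_nhdsWithin_of_eventually_nhds (eventually_lt_nhds one_pos)
        have h2 : ∀ᶠ t in (nhdsWithin (0:ℝ) (Ici 0)), t ∈ Ici (0:ℝ) :=
          eventually_mem_nhdsWithin
        filter_upwards [h1, h2] with t ht1 ht2
        rcases eq_or_lt_of_le (mem_Ici.mp ht2) with h | h
        · rw [← h, hf0, Real.zero_rpow (by linarith : m ≠ 0)]
        · rw [hfval t h.ne', Real.rpow_def_of_pos h]
          apply Real.exp_le_exp.mpr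
          have := hgm (Real.log t) (Real.log_nonpos h.le ht1.le)
          linarith [this]
      have hlb : ∀ᶠ t in (nhdsWithin (0:ℝ) (Ici 0)), 0 ≤ f t := by
        have h2 : ∀ᶠ t in (nhdsWithin (0:ℝ) (Ici 0)), t ∈ Ici (0:ℝ) :=
          eventually_mem_nhdsWithin
        filter_upwards [h2] with t ht2
        rcases eq_or_lt_of_le (mem_Ici.mp ht2) with h | h
        · rw [← h, hf0]
        · exact (hfpos t h).le
      have hg0 : Tendsto (fun t : ℝ => t ^ m) (nhdsWithin (0:ℝ) (Ici 0)) (nhds 0) := by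
        have : ContinuousAt (fun t : ℝ => t ^ m) 0 :=
          Real.continuousAt_rpow_const 0 m (Or.inr (by linarith))
        have h2 : Tendsto (fun t : ℝ => t ^ m) (nhdsWithin (0:ℝ) (Ici 0)) (nhds ((0:ℝ) ^ m)) :=
          this.tendsto.mono_left nhdsWithin_le_nhds
        rwa [Real.zero_rpow (by linarith : m ≠ 0)] at h2
      exact squeeze_zero' hlb hub hg0
    · -- s > 0
      apply ContinuousAt.continuousWithinAt
      have hF : ContinuousAt (fun t => Real.exp (g (Real.log t))) s :=
        (Real.continuous_exp.continuousAt.comp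
          (hgcont.continuousAt.comp (Real.continuousAt_log h.ne')))
      apply hF.congr
      have : ∀ᶠ t in nhds s, t ≠ 0 := eventually_ne_nhds h.ne'
      filter_upwards [this] with t ht
      exact (hfval t ht).symm
  -- the quotient identities
  have hquot : ∀ c : ℝ, ∀ s : ℝ, 0 < s → f s / s ^ c = Real.exp (g (Real.log s) - c * Real.log s) := by
    intro c s hs
    rw [hfval s hs.ne', Real.rpow_def_of_pos hs, ← Real.exp_sub]
    ring_nf
  refine ⟨f, hfcont, hf0, hfpos, ?_, ?_, ?_⟩
  · intro s hs t ht hst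
    show f t / t ^ P ≤ f s / s ^ P
    rw [hquot P s (mem_Ioi.mp hs), hquot P t (mem_Ioi.mp ht)]
    exact Real.exp_le_exp.mpr (hmonP (Real.log_le_log (mem_Ioi.mp hs) hst))
  · intro s hs t ht hst
    show f s / s ^ ℓ ≤ f t / t ^ ℓ
    rw [hquot ℓ s (mem_Ioi.mp hs), hquot ℓ t (mem_Ioi.mp ht)]
    exact Real.exp_le_exp.mpr (hmonl (Real.log_le_log (mem_Ioi.mp hs) hst))
  · -- the sequences
    have hpi := Real.pi_pos
    -- sqrt tends to infinity
    have hsqrt : Tendsto Real.sqrt atTop atTop := by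
      apply tendsto_atTop_atTop.mpr
      intro b
      refine ⟨b ^ 2, fun a ha => ?_⟩
      calc b ≤ |b| := le_abs_self b
        _ = Real.sqrt (b ^ 2) := (Real.sqrt_sq_eq_abs b).symm
        _ ≤ Real.sqrt a := Real.sqrt_le_sqrt ha
    have tendstoaux : ∀ a : ℝ, Tendsto (fun i : ℕ =>
        Real.exp (Real.sqrt (Real.exp ((a + 2 * Real.pi * i) / θ) - 1))) atTop atTop := by
      intro a
      have base : Tendsto (fun i : ℕ => (a + 2 * Real.pi * i) / θ) atTop atTop := by
        apply Tendsto.atTop_div_const hθpos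
        apply tendsto_atTop_add_const_left
        exact (tendsto_natCast_atTop_atTop (R := ℝ)).const_mul_atTop (by linarith)
      have base2 : Tendsto (fun i : ℕ => Real.exp ((a + 2 * Real.pi * i) / θ) - 1)
          atTop atTop := by
        have := tendsto_atTop_add_const_right atTop (-1 : ℝ) (Real.tendsto_exp_atTop.comp base)
        exact this.congr (fun i => by simp [Function.comp_apply, sub_eq_add_neg])
      exact Real.tendsto_exp_atTop.comp (hsqrt.comp base2)
    -- generic value computation
    have key : ∀ c : ℝ, 0 ≤ c →
        f (Real.exp (Real.sqrt (Real.exp (c / θ) - 1))) =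
          Real.exp ((q + A * Real.sin c) * Real.sqrt (Real.exp (c / θ) - 1)) := by
      intro c hc
      have hE : (1:ℝ) ≤ Real.exp (c / θ) := Real.one_le_exp (div_nonneg hc hθpos.le)
      set x : ℝ := Real.sqrt (Real.exp (c / θ) - 1) with hxdef
      have hx2 : x ^ 2 = Real.exp (c / θ) - 1 := Real.sq_sqrt (by linarith)
      have hu' : u x = c := by
        simp only [hudef, hx2]
        rw [show (1:ℝ) + (Real.exp (c / θ) - 1) = Real.exp (c / θ) by ring, Real.log_exp,
          mul_comm, div_mul_cancel₀ _ hθpos.ne']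
      rw [hfval _ (Real.exp_ne_zero _), Real.log_exp]
      simp only [hgdef, hu']
      ring_nf
    have keyp : ∀ c r : ℝ, 0 ≤ c → q + A * Real.sin c = r →
        f (Real.exp (Real.sqrt (Real.exp (c / θ) - 1))) =
          (Real.exp (Real.sqrt (Real.exp (c / θ) - 1))) ^ r := by
      intro c r hc hr
      rw [key c hc, hr, Real.rpow_def_of_pos (Real.exp_pos _), Real.log_exp, mul_comm]
    refine ⟨fun i => Real.exp (Real.sqrt (Real.exp ((Real.pi / 2 + 2 * Real.pi * i) / θ) - 1)),
      fun i => Real.exp (Real.sqrt (Real.exp ((3 * Real.pi / 2 + 2 * Real.pi * i) / θ) - 1)),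
      tendstoaux _, tendstoaux _, ?_, ?_⟩
    · intro i
      apply keyp
      · positivity
      · have : Real.sin (Real.pi / 2 + 2 * Real.pi * i) = 1 := by
          rw [show Real.pi / 2 + 2 * Real.pi * (i:ℝ) = Real.pi / 2 + (i:ℕ) * (2 * Real.pi) by
            push_cast; ring, Real.sin_add_nat_mul_two_pi, Real.sin_pi_div_two]
        rw [this, hqdef, hAdef]
        ring
    · intro i
      apply keyp
      · positivity
      · have : Real.sin (3 * Real.pi / 2 + 2 * Real.pi * i) = -1 := by
          rw [show 3 * Real.pi / 2 + 2 * Real.pi * (i:ℝ)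
              = (Real.pi / 2 + Real.pi) + (i:ℕ) * (2 * Real.pi) by push_cast; ring,
            Real.sin_add_nat_mul_two_pi, Real.sin_add_pi, Real.sin_pi_div_two]
        rw [this, hqdef, hAdef]
        ring
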